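/- (Explicit utility gap under isotropic posterior covariance.) Let $U(r) = r - \tfrac{\gamma}{2}r^2$ with $\gamma > 0$. Let $R$ be a random vector in $\mathbb{R}^K$ with finite second moments and $\theta$ a random $K \times L$ real matrix independent of $R$ whose entries have pairwise covariance zero and common variance $\sigma^2 > 0$. Fix $w_b \in \mathbb{R}^K$, $z \in \mathbb{R}^L$, set $m = \mathbb{E}[\theta]$ and $G(\theta_0) = \mathbb{E}[U((w_b+\theta_0 z)\cdot R)]$. Then $G(m) - \mathbb{E}[G(\theta)] = \tfrac{\gamma}{2}\,\sigma^2\,\|z\|^2\,\mathbb{E}[\|R\|^2]$; in particular, if $\mathbb{E}[\|R\|^2] > 0$ this gap is strictly increasing in $\gamma$, in $\sigma$, and in $\|z\|$. -/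

import Mathlib

open Matrix MeasureTheory ProbabilityTheory

/-- **Explicit utility gap under isotropic posterior covariance.** For quadratic
utility `U r = r - (γ/2) r²`, `R` with finite second moments, and `θ` independent of `R` with
entrywise covariance `σ² I`, the gap is `G m - 𝔼[G θ] = (γ/2) σ² ‖z‖² 𝔼‖R‖²`; in particular,
if `𝔼‖R‖² > 0` the map `(g, s, t) ↦ (g/2) s² t² 𝔼‖R‖²` giving the gap as a function of the risk
aversion `g`, the posterior scale `s` and the signal norm `t` is strictly increasing in each of
its (positive) arguments. -/
theorem explicit_gap_isotropic
    {Ω : Type*} [MeasurableSpace Ω] (μ : Measure Ω) [IsProbabilityMeasure μ]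
    {K L : ℕ} (γ : ℝ) (hγ : 0 < γ)
    (U : ℝ → ℝ) (hU : ∀ r, U r = r - γ/2 * r^2)
    (R : Ω → Fin K → ℝ) (θ : Ω → Matrix (Fin K) (Fin L) ℝ)
    (hindep : IndepFun (fun ω => Matrix.of.symm (θ ω)) R μ)
    (hR1 : ∀ k, Integrable (fun ω => R ω k) μ)
    (hR2 : ∀ k k', Integrable (fun ω => R ω k * R ω k') μ)
    (hθ1 : ∀ k l, Integrable (fun ω => θ ω k l) μ)
    (hθ2 : ∀ k l k' l', Integrable (fun ω => θ ω k l * θ ω k' l') μ)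
    (σ : ℝ) (hσ : 0 < σ^2)
    (w_b : Fin K → ℝ) (z : Fin L → ℝ)
    (m : Matrix (Fin K) (Fin L) ℝ) (hm : ∀ k l, m k l = ∫ ω, θ ω k l ∂μ)
    (hiso : ∀ k l k' l',
      (∫ ω, (θ ω k l - m k l) * (θ ω k' l' - m k' l') ∂μ)
        = if (k, l) = (k', l') then σ^2 else 0)
    (G : Matrix (Fin K) (Fin L) ℝ → ℝ)
    (hG : ∀ θ₀, G θ₀ = ∫ ω, U ((w_b + θ₀ *ᵥ z) ⬝ᵥ R ω) ∂μ)
    (E2 : ℝ) (hE2 : E2 = ∫ ω, ∑ k, (R ω k)^2 ∂μ) :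
    (G m - ∫ ω, G (θ ω) ∂μ = γ/2 * σ^2 * (∑ l, (z l)^2) * E2) ∧
    (0 < E2 →
      (∀ g₁ g₂ s t : ℝ, 0 < s → 0 < t → 0 < g₁ → g₁ < g₂ →
        g₁/2 * s^2 * t^2 * E2 < g₂/2 * s^2 * t^2 * E2) ∧
      (∀ g s₁ s₂ t : ℝ, 0 < g → 0 < t → 0 < s₁ → s₁ < s₂ →
        g/2 * s₁^2 * t^2 * E2 < g/2 * s₂^2 * t^2 * E2) ∧
      (∀ g s t₁ t₂ : ℝ, 0 < g → 0 < s → 0 < t₁ → t₁ < t₂ →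
        g/2 * s^2 * t₁^2 * E2 < g/2 * s^2 * t₂^2 * E2)) := by
  classical
  set e1 : Fin K → ℝ := fun k => ∫ ω, R ω k ∂μ with he1
  set e2 : Fin K → Fin K → ℝ := fun k k' => ∫ ω, R ω k * R ω k' ∂μ with he2
  set c : Matrix (Fin K) (Fin L) ℝ → Fin K → ℝ := fun A k => w_b k + ∑ l, A k l * z l with hc
  -- Step 1: closed form of `G` on any fixed matrix
  have hGA : ∀ A : Matrix (Fin K) (Fin L) ℝ,
      G A = (∑ k, c A k * e1 k) - γ/2 * ∑ k, ∑ k', (c A k * c A k') * e2 k k' := by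
    intro A
    have hdot : ∀ ω, (w_b + A *ᵥ z) ⬝ᵥ R ω = ∑ k, c A k * R ω k := by
      intro ω
      simp [dotProduct, Matrix.mulVec, hc]
    have hptw : ∀ ω, U ((w_b + A *ᵥ z) ⬝ᵥ R ω)
        = (∑ k, c A k * R ω k) - γ/2 * ∑ k, ∑ k', (c A k * c A k') * (R ω k * R ω k') := by
      intro ω
      rw [hU, hdot]
      congr 1
      congr 1
      rw [sq, Finset.sum_mul_sum]
      exact Finset.sum_congr rfl fun k _ => Finset.sum_congr rfl fun k' _ => by ring
    have hint1 : Integrable (fun ω => ∑ k, c A k * R ω k) μ :=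
      integrable_finset_sum _ fun k _ => (hR1 k).const_mul _
    have hint2 : Integrable (fun ω => ∑ k, ∑ k', (c A k * c A k') * (R ω k * R ω k')) μ :=
      integrable_finset_sum _ fun k _ =>
        integrable_finset_sum _ fun k' _ => (hR2 k k').const_mul _
    rw [hG]
    calc ∫ ω, U ((w_b + A *ᵥ z) ⬝ᵥ R ω) ∂μ
        = ∫ ω, ((∑ k, c A k * R ω k)
            - γ/2 * ∑ k, ∑ k', (c A k * c A k') * (R ω k * R ω k')) ∂μ := by
          exact integral_congr_ae (Filter.Eventually.of_forall fun ω => hptw ω)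
      _ = (∫ ω, ∑ k, c A k * R ω k ∂μ)
            - γ/2 * ∫ ω, ∑ k, ∑ k', (c A k * c A k') * (R ω k * R ω k') ∂μ := by
          rw [integral_sub hint1 (hint2.const_mul _), integral_const_mul]
      _ = _ := by
          rw [integral_finset_sum _ (fun k _ => (hR1 k).const_mul _),
            integral_finset_sum _ (fun k _ =>
              integrable_finset_sum _ fun k' _ => (hR2 k k').const_mul _)]
          congr 1
          · exact Finset.sum_congr rfl fun k _ => integral_const_mul _ _
          · congr 1
            refine Finset.sum_congr rfl fun k _ => ?_
            rw [integral_finset_sum _ (fun k' _ => (hR2 k k').const_mul _)]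
            exact Finset.sum_congr rfl fun k' _ => integral_const_mul _ _
  -- Step 2: centered signal exposures
  set d : Ω → Fin K → ℝ := fun ω k => ∑ l, (θ ω k l - m k l) * z l with hd0
  have hcd : ∀ ω k, c (θ ω) k = c m k + d ω k := by
    intro ω k
    simp only [hc, hd0, sub_mul, Finset.sum_sub_distrib]
    ring
  have hq_int : ∀ k l k' l',
      Integrable (fun ω => (θ ω k l - m k l) * (θ ω k' l' - m k' l')) μ := by
    intro k l k' l'
    have heq : (fun ω => (θ ω k l - m k l) * (θ ω k' l' - m k' l'))
        = fun ω => (θ ω k l * θ ω k' l' - θ ω k l * m k' l')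
            - (m k l * θ ω k' l' - m k l * m k' l') := by
      funext ω; ring
    rw [heq]
    exact ((hθ2 k l k' l').sub ((hθ1 k l).mul_const _)).sub
      (((hθ1 k' l').const_mul _).sub (integrable_const _))
  have hd_int : ∀ k, Integrable (fun ω => d ω k) μ :=
    fun k => integrable_finset_sum _ fun l _ =>
      (((hθ1 k l).sub (integrable_const _)).mul_const _)
  have hd_mean : ∀ k, ∫ ω, d ω k ∂μ = 0 := by
    intro k
    simp only [hd0]
    have hint : ∀ l : Fin L, Integrable (fun ω => (θ ω k l - m k l) * z l) μ := fun l => by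
      exact ((hθ1 k l).sub (integrable_const _)).mul_const _
    rw [integral_finset_sum _ (fun l _ => hint l)]
    refine Finset.sum_eq_zero fun l _ => ?_
    rw [integral_mul_const, integral_sub (hθ1 k l) (integrable_const _), integral_const]
    simp [hm k l]
  have hdexp : ∀ k k', (fun ω => d ω k * d ω k')
      = fun ω => ∑ l, ∑ l', ((θ ω k l - m k l) * (θ ω k' l' - m k' l')) * (z l * z l') := by
    intro k k'
    funext ω
    simp only [hd0]
    rw [Finset.sum_mul_sum]
    exact Finset.sum_congr rfl fun l _ => Finset.sum_congr rfl fun l' _ => by ring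
  have hdd_int : ∀ k k', Integrable (fun ω => d ω k * d ω k') μ := by
    intro k k'
    rw [hdexp k k']
    exact integrable_finset_sum _ fun l _ =>
      integrable_finset_sum _ fun l' _ => (hq_int k l k' l').mul_const _
  have hdd_mean : ∀ k k',
      ∫ ω, d ω k * d ω k' ∂μ = if k = k' then σ^2 * ∑ l, (z l)^2 else 0 := by
    intro k k'
    rw [hdexp k k',
      integral_finset_sum _ (fun l _ =>
        integrable_finset_sum _ fun l' _ => (hq_int k l k' l').mul_const _)]
    have hterm : ∀ l, ∫ ω, ∑ l', ((θ ω k l - m k l) * (θ ω k' l' - m k' l')) * (z l * z l') ∂μ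
        = ∑ l', (if (k, l) = (k', l') then σ^2 else 0) * (z l * z l') := by
      intro l
      rw [integral_finset_sum _ (fun l' _ => (hq_int k l k' l').mul_const _)]
      exact Finset.sum_congr rfl fun l' _ => by
        rw [integral_mul_const, hiso]
    simp only [hterm]
    by_cases hk : k = k'
    · subst hk
      simp only [Prod.mk.injEq, true_and, if_pos rfl]
      rw [Finset.mul_sum]
      refine Finset.sum_congr rfl fun l _ => ?_
      rw [Finset.sum_eq_single l]
      · simp [pow_two]
      · intro l' _ hne
        simp [(Ne.symm hne)]
      · simp
    · rw [if_neg hk]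
      refine Finset.sum_eq_zero fun l _ => Finset.sum_eq_zero fun l' _ => ?_
      have : (k, l) ≠ (k', l') := by
        simp [Prod.ext_iff, hk]
      rw [if_neg this, zero_mul]
  -- moments of c (θ ω)
  have hc_eq : ∀ k, (fun ω => c (θ ω) k) = fun ω => c m k + d ω k :=
    fun k => funext fun ω => hcd ω k
  have hc_int : ∀ k, Integrable (fun ω => c (θ ω) k) μ := by
    intro k; rw [hc_eq k]; exact (integrable_const _).add (hd_int k)
  have hc_mean : ∀ k, ∫ ω, c (θ ω) k ∂μ = c m k := by
    intro k
    rw [hc_eq k, integral_add (integrable_const _) (hd_int k), integral_const, hd_mean]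
    simp
  have hcc_eq : ∀ k k', (fun ω => c (θ ω) k * c (θ ω) k')
      = fun ω => c m k * c m k'
          + (c m k * d ω k' + (d ω k * c m k' + d ω k * d ω k')) := by
    intro k k'
    funext ω
    rw [hcd ω k, hcd ω k']; ring
  have hcc_int : ∀ k k', Integrable (fun ω => c (θ ω) k * c (θ ω) k') μ := by
    intro k k'
    rw [hcc_eq k k']
    exact (integrable_const _).add (((hd_int k').const_mul _).add
      (((hd_int k).mul_const _).add (hdd_int k k')))
  have hcc_mean : ∀ k k', ∫ ω, c (θ ω) k * c (θ ω) k' ∂μ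
      = c m k * c m k' + (if k = k' then σ^2 * ∑ l, (z l)^2 else 0) := by
    intro k k'
    have ig1 : Integrable (fun ω => c m k * d ω k' + (d ω k * c m k' + d ω k * d ω k')) μ := by
      exact ((hd_int k').const_mul _).add (((hd_int k).mul_const _).add (hdd_int k k'))
    have ig2 : Integrable (fun ω => d ω k * c m k' + d ω k * d ω k') μ := by
      exact ((hd_int k).mul_const _).add (hdd_int k k')
    rw [hcc_eq k k',
      integral_add (integrable_const _) ig1,
      integral_add ((hd_int k').const_mul _) ig2,
      integral_add ((hd_int k).mul_const _) (hdd_int k k'),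
      integral_const, integral_const_mul, integral_mul_const,
      hd_mean, hd_mean, hdd_mean]
    simp
  -- Step 3: integrate G ∘ θ
  have hGθ : (fun ω => G (θ ω)) = fun ω =>
      (∑ k, c (θ ω) k * e1 k) - γ/2 * ∑ k, ∑ k', (c (θ ω) k * c (θ ω) k') * e2 k k' :=
    funext fun ω => hGA (θ ω)
  have hint_lin : Integrable (fun ω => ∑ k, c (θ ω) k * e1 k) μ :=
    integrable_finset_sum _ fun k _ => (hc_int k).mul_const _
  have hint_quad :
      Integrable (fun ω => ∑ k, ∑ k', (c (θ ω) k * c (θ ω) k') * e2 k k') μ :=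
    integrable_finset_sum _ fun k _ =>
      integrable_finset_sum _ fun k' _ => (hcc_int k k').mul_const _
  have hIG : ∫ ω, G (θ ω) ∂μ
      = (∑ k, c m k * e1 k)
        - γ/2 * ∑ k, ∑ k',
            (c m k * c m k' + (if k = k' then σ^2 * ∑ l, (z l)^2 else 0)) * e2 k k' := by
    rw [hGθ, integral_sub hint_lin (hint_quad.const_mul _), integral_const_mul,
      integral_finset_sum _ (fun k _ => (hc_int k).mul_const _),
      integral_finset_sum _ (fun k _ =>
        integrable_finset_sum _ fun k' _ => (hcc_int k k').mul_const _)]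
    congr 1
    · refine Finset.sum_congr rfl fun k _ => ?_
      rw [integral_mul_const, hc_mean]
    · congr 1
      refine Finset.sum_congr rfl fun k _ => ?_
      rw [integral_finset_sum _ (fun k' _ => (hcc_int k k').mul_const _)]
      refine Finset.sum_congr rfl fun k' _ => ?_
      rw [integral_mul_const, hcc_mean]
  have hE2' : E2 = ∑ k, e2 k k := by
    rw [hE2, integral_finset_sum _ (fun k _ => by simpa [pow_two] using hR2 k k)]
    exact Finset.sum_congr rfl fun k _ => by simp only [pow_two, he2]
  have hdiag : ∑ k, ∑ k' : Fin K, (if k = k' then σ^2 * ∑ l, (z l)^2 else 0) * e2 k k'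
      = σ^2 * (∑ l, (z l)^2) * ∑ k, e2 k k := by
    simp only [ite_mul, zero_mul, Finset.sum_ite_eq, Finset.mem_univ, if_true]
    exact (Finset.mul_sum _ _ _).symm
  have hsplit : ∑ k, ∑ k',
        (c m k * c m k' + (if k = k' then σ^2 * ∑ l, (z l)^2 else 0)) * e2 k k'
      = (∑ k, ∑ k', (c m k * c m k') * e2 k k')
        + ∑ k, ∑ k' : Fin K, (if k = k' then σ^2 * ∑ l, (z l)^2 else 0) * e2 k k' := by
    rw [← Finset.sum_add_distrib]
    refine Finset.sum_congr rfl fun k _ => ?_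
    rw [← Finset.sum_add_distrib]
    exact Finset.sum_congr rfl fun k' _ => by ring
  constructor
  · rw [hGA m, hIG, hsplit, hdiag, hE2']
    ring
  · intro hE2pos
    refine ⟨?_, ?_, ?_⟩
    · intro g₁ g₂ s t hs ht hg₁ hlt
      have h1 : (0:ℝ) < s^2 * t^2 * E2 :=
        mul_pos (mul_pos (pow_pos hs 2) (pow_pos ht 2)) hE2pos
      nlinarith
    · intro g s₁ s₂ t hg ht hs₁ hlt
      have h1 : s₁^2 < s₂^2 := by nlinarith
      have h2 : (0:ℝ) < g/2 * t^2 * E2 :=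
        mul_pos (mul_pos (by linarith) (pow_pos ht 2)) hE2pos
      nlinarith
    · intro g s t₁ t₂ hg hs ht₁ hlt
      have h1 : t₁^2 < t₂^2 := by nlinarith
      have h2 : (0:ℝ) < g/2 * s^2 * E2 :=
        mul_pos (mul_pos (by linarith) (pow_pos hs 2)) hE2pos
      nlinarith
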